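/- Let G be a connected graph with max degree d_G and W a potential whose ground state ψ of H = L_G + diag(W) is single-peaked (the set of local maxima of ψ forms a connected vertex set). Then the spectral gap satisfies γ ≥ 1/(2(|W| + d_G)|V_G|²), where |W| = max W − min W. -/

import Mathlib

set_option linter.unusedSectionVars false
set_option maxHeartbeats 1000000
open Matrix Finset


open Matrix

noncomputable def hamiltonian {V : Type*} [Fintype V] [DecidableEq V]
    (G : SimpleGraph V) [DecidableRel G.Adj] (W : V → ℝ) : Matrix V V ℝ :=
  G.lapMatrix ℝ + Matrix.diagonal W

lemma hamiltonian_isHermitian {V : Type*} [Fintype V] [DecidableEq V]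
    (G : SimpleGraph V) [DecidableRel G.Adj] (W : V → ℝ) :
    (hamiltonian G W).IsHermitian :=
  (SimpleGraph.posSemidef_lapMatrix ℝ G).isHermitian.add (Matrix.isHermitian_diagonal W)

noncomputable def sortedEigenvalues {n : Type*} [Fintype n] [DecidableEq n]
    {A : Matrix n n ℝ} (hA : A.IsHermitian) : Fin (Fintype.card n) → ℝ :=
  fun i =>
    let f : Fin (Fintype.card n) → ℝ := hA.eigenvalues ∘ (Fintype.equivFin n).symm
    f (Tuple.sort f i)

/-- Gap between the two smallest eigenvalues, counted with multiplicity. -/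
noncomputable def specGap {n : Type*} [Fintype n] [DecidableEq n]
    {A : Matrix n n ℝ} (hA : A.IsHermitian) : ℝ :=
  if h : 2 ≤ Fintype.card n then
    sortedEigenvalues hA ⟨1, by omega⟩ - sortedEigenvalues hA ⟨0, by omega⟩
  else 0

/-- `x` is a local maximum of `ψ`: `ψ x ≥ ψ y` for all neighbors `y`. -/
def IsGraphLocalMax {V : Type*} (G : SimpleGraph V) (ψ : V → ℝ) (x : V) : Prop :=
  ∀ y, G.Adj x y → ψ y ≤ ψ x

/-- `ψ` is single-peaked: its set of local maxima is a connected set of vertices. -/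
def SinglePeaked {V : Type*} (G : SimpleGraph V) (ψ : V → ℝ) : Prop :=
  (G.induce {x | IsGraphLocalMax G ψ x}).Connected

section Aux

variable {V : Type*} [Fintype V] [DecidableEq V]
variable (G : SimpleGraph V) [DecidableRel G.Adj]

lemma aux_exists_ascent (ψ : V → ℝ) (x : V) :
    ∃ m : V, IsGraphLocalMax G ψ m ∧ ∃ q : G.Walk x m, ∀ v ∈ q.support, ψ x ≤ ψ v := by
  by_cases hx : IsGraphLocalMax G ψ x
  · exact ⟨x, hx, SimpleGraph.Walk.nil, by simp⟩
  · have : ∃ y, G.Adj x y ∧ ψ x < ψ y := by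
      simp only [IsGraphLocalMax, not_forall] at hx
      obtain ⟨y, hy, hlt⟩ := hx
      exact ⟨y, hy, lt_of_not_ge hlt⟩
    obtain ⟨y, hadj, hlt⟩ := this
    have hdec : (univ.filter fun v => ψ y < ψ v).card <
        (univ.filter fun v => ψ x < ψ v).card := by
      apply Finset.card_lt_card
      constructor
      · intro v hv
        simp only [mem_filter, mem_univ, true_and] at hv ⊢
        exact hlt.trans hv
      · intro hsub
        have hy : y ∈ univ.filter fun v => ψ x < ψ v := by simp [hlt]
        have := hsub hy
        simp at this
    obtain ⟨m, hm, q, hq⟩ := aux_exists_ascent ψ y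
    refine ⟨m, hm, SimpleGraph.Walk.cons hadj q, ?_⟩
    intro v hv
    rw [SimpleGraph.Walk.support_cons, List.mem_cons] at hv
    rcases hv with rfl | hv
    · exact le_refl _
    · exact (le_of_lt hlt).trans (hq v hv)
termination_by (univ.filter fun v => ψ x < ψ v).card

lemma aux_locmax_walk (ψ : V → ℝ) :
    ∀ (a b : {x | IsGraphLocalMax G ψ x})
      (_ : (G.induce {x | IsGraphLocalMax G ψ x}).Walk a b),
      ψ (a : V) = ψ (b : V) ∧
        ∃ r : G.Walk (a : V) (b : V), ∀ v ∈ r.support, ψ v = ψ (a : V) := by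
  intro a b w
  induction w with
  | nil => exact ⟨rfl, SimpleGraph.Walk.nil, by simp⟩
  | @cons s u t h q ih =>
    have hadj : G.Adj (s : V) (u : V) := h
    have heq : ψ (s : V) = ψ (u : V) := le_antisymm (u.2 _ hadj.symm) (s.2 _ hadj)
    obtain ⟨heq2, r, hr⟩ := ih
    refine ⟨heq.trans heq2, SimpleGraph.Walk.cons hadj r, ?_⟩
    intro v hv
    rw [SimpleGraph.Walk.support_cons, List.mem_cons] at hv
    rcases hv with rfl | hv
    · rfl
    · rw [hr v hv, heq]

lemma aux_exists_good_path (ψ : V → ℝ) (hpeak : SinglePeaked G ψ) (x y : V) :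
    ∃ p : G.Walk x y, p.IsPath ∧ ∀ v ∈ p.support, min (ψ x) (ψ y) ≤ ψ v := by
  obtain ⟨mx, hmx, qx, hqx⟩ := aux_exists_ascent G ψ x
  obtain ⟨my, hmy, qy, hqy⟩ := aux_exists_ascent G ψ y
  obtain ⟨w⟩ := hpeak.preconnected ⟨mx, hmx⟩ ⟨my, hmy⟩
  obtain ⟨heq, r, hr⟩ := aux_locmax_walk G ψ ⟨mx, hmx⟩ ⟨my, hmy⟩ w
  have hmxx : ψ x ≤ ψ mx := hqx mx (SimpleGraph.Walk.end_mem_support qx)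
  let p0 : G.Walk x y := qx.append (r.append qy.reverse)
  have hsupp : ∀ v ∈ p0.support, min (ψ x) (ψ y) ≤ ψ v := by
    intro v hv
    rw [SimpleGraph.Walk.mem_support_append_iff] at hv
    rcases hv with hv | hv
    · exact le_trans (min_le_left _ _) (hqx v hv)
    · rw [SimpleGraph.Walk.mem_support_append_iff] at hv
      rcases hv with hv | hv
      · rw [hr v hv]
        exact le_trans (min_le_left _ _) hmxx
      · rw [SimpleGraph.Walk.support_reverse, List.mem_reverse] at hv
        exact le_trans (min_le_right _ _) (hqy v hv)
  exact ⟨p0.bypass, p0.bypass_isPath,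
    fun v hv => hsupp v (p0.support_bypass_subset hv)⟩

lemma aux_telescope (g : V → ℝ) {x y : V} (p : G.Walk x y) :
    (p.darts.map (fun d => g d.toProd.2 - g d.toProd.1)).sum = g y - g x := by
  induction p with
  | nil => simp
  | cons h q ih =>
    simp only [SimpleGraph.Walk.darts_cons, List.map_cons, List.sum_cons, ih]
    ring

lemma aux_quadform (W : V → ℝ) (f : V → ℝ) :
    f ⬝ᵥ (hamiltonian G W *ᵥ f) =
      (∑ x : V, ∑ y : V, if G.Adj x y then (f x - f y) ^ 2 else 0) / 2
        + ∑ x : V, W x * f x ^ 2 := by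
  have h1 : f ⬝ᵥ (G.lapMatrix ℝ *ᵥ f) =
      (∑ x : V, ∑ y : V, if G.Adj x y then (f x - f y) ^ 2 else 0) / 2 := by
    rw [← Matrix.toLinearMap₂'_apply', SimpleGraph.lapMatrix_toLinearMap₂']
  have h2 : f ⬝ᵥ (Matrix.diagonal W *ᵥ f) = ∑ x : V, W x * f x ^ 2 := by
    simp only [dotProduct, Matrix.mulVec_diagonal]
    exact Finset.sum_congr rfl fun x _ => by ring
  rw [hamiltonian, Matrix.add_mulVec, dotProduct_add, h1, h2]

lemma aux_eigen_pointwise (W : V → ℝ) (ψ : V → ℝ) (E : ℝ)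
    (heig : (hamiltonian G W) *ᵥ ψ = E • ψ) (x : V) :
    ∑ y : V, (if G.Adj x y then ψ x - ψ y else 0) = (E - W x) * ψ x := by
  have hx := congrFun heig x
  simp only [hamiltonian, Matrix.add_mulVec, Pi.add_apply, Pi.smul_apply, smul_eq_mul,
    Matrix.mulVec_diagonal, SimpleGraph.lapMatrix_mulVec_apply] at hx
  have h3 : ∑ y : V, (if G.Adj x y then ψ x - ψ y else 0)
      = ∑ y ∈ G.neighborFinset x, (ψ x - ψ y) := by
    rw [Finset.sum_ite, Finset.sum_const_zero, add_zero]
    congr 1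
    ext y
    simp [SimpleGraph.mem_neighborFinset]
  have h4 : ∑ y ∈ G.neighborFinset x, (ψ x - ψ y)
      = (G.degree x : ℝ) * ψ x - ∑ u ∈ G.neighborFinset x, ψ u := by
    rw [Finset.sum_sub_distrib, Finset.sum_const, SimpleGraph.degree, nsmul_eq_mul]
  rw [h3, h4]
  linarith [hx]

lemma aux_key [Nonempty V] (W : V → ℝ) (ψ : V → ℝ) (E : ℝ)
    (hψpos : ∀ x, 0 < ψ x)
    (heig : (hamiltonian G W) *ᵥ ψ = E • ψ)
    (hpeak : SinglePeaked G ψ)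
    (f : V → ℝ) (hf : f ⬝ᵥ ψ = 0) :
    (E + 1 / (2 * (Fintype.card V : ℝ) ^ 2)) * (f ⬝ᵥ f) ≤
      f ⬝ᵥ (hamiltonian G W *ᵥ f) := by
  set n : ℝ := (Fintype.card V : ℝ) with hn
  have hn0 : (0 : ℝ) < n := by
    rw [hn]; exact_mod_cast Fintype.card_pos
  set g : V → ℝ := fun v => f v / ψ v with hg
  have hfg : ∀ v, f v = g v * ψ v := fun v => by
    rw [hg]; exact (div_mul_cancel₀ (f v) (hψpos v).ne').symm
  set S : ℝ := ∑ x : V, ∑ y : V,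
      (if G.Adj x y then ψ x * ψ y * (g x - g y) ^ 2 else 0) with hSdef
  have hS_nonneg : 0 ≤ S := by
    refine Finset.sum_nonneg fun x _ => Finset.sum_nonneg fun y _ => ?_
    by_cases h : G.Adj x y
    · simp only [if_pos h]
      have := (hψpos x).le
      have := (hψpos y).le
      positivity
    · simp [h]
  have hfsq : f ⬝ᵥ f = ∑ x : V, f x ^ 2 := by
    simp [dotProduct, sq]
  have hf0 : ∑ x : V, f x * ψ x = 0 := hf
  -- Identity: f ⬝ᵥ H f = E (f ⬝ᵥ f) + S / 2
  have hsum2 : ∑ x : V, ∑ y : V,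
      (if G.Adj x y then g x ^ 2 * ψ x * (ψ y - ψ x) else 0)
      = ∑ x : V, (W x - E) * f x ^ 2 := by
    refine Finset.sum_congr rfl fun x _ => ?_
    have h1 : ∑ y : V, (if G.Adj x y then g x ^ 2 * ψ x * (ψ y - ψ x) else 0)
        = g x ^ 2 * ψ x * ∑ y : V, (if G.Adj x y then (ψ y - ψ x) else 0) := by
      rw [Finset.mul_sum]
      exact Finset.sum_congr rfl fun y _ => by by_cases h : G.Adj x y <;> simp [h]
    have h2 : ∑ y : V, (if G.Adj x y then (ψ y - ψ x) else 0)
        = -((E - W x) * ψ x) := by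
      rw [← aux_eigen_pointwise G W ψ E heig x, ← Finset.sum_neg_distrib]
      exact Finset.sum_congr rfl fun y _ => by by_cases h : G.Adj x y <;> simp [h]
    rw [h1, h2, hfg x]
    ring
  have hsum3 : ∑ x : V, ∑ y : V,
      (if G.Adj x y then g y ^ 2 * ψ y * (ψ x - ψ y) else 0)
      = ∑ x : V, ∑ y : V, (if G.Adj x y then g x ^ 2 * ψ x * (ψ y - ψ x) else 0) := by
    rw [Finset.sum_comm]
    exact Finset.sum_congr rfl fun x _ => Finset.sum_congr rfl fun y _ =>
      if_congr ⟨fun h => h.symm, fun h => h.symm⟩ rfl rfl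
  have hident : f ⬝ᵥ (hamiltonian G W *ᵥ f) = E * (f ⬝ᵥ f) + S / 2 := by
    rw [aux_quadform]
    have hS : S = (∑ x : V, ∑ y : V, if G.Adj x y then (f x - f y) ^ 2 else 0)
        + 2 * ∑ x : V, (W x - E) * f x ^ 2 := by
      have e1 : ∀ x y : V, (if G.Adj x y then ψ x * ψ y * (g x - g y) ^ 2 else 0)
          = (if G.Adj x y then (f x - f y) ^ 2 else 0)
            + ((if G.Adj x y then g x ^ 2 * ψ x * (ψ y - ψ x) else 0)
            + (if G.Adj x y then g y ^ 2 * ψ y * (ψ x - ψ y) else 0)) := by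
        intro x y
        by_cases h : G.Adj x y
        · simp only [if_pos h, hfg x, hfg y]; ring
        · simp [h]
      rw [hSdef]
      calc ∑ x : V, ∑ y : V, (if G.Adj x y then ψ x * ψ y * (g x - g y) ^ 2 else 0)
          = ∑ x : V, ∑ y : V, ((if G.Adj x y then (f x - f y) ^ 2 else 0)
            + ((if G.Adj x y then g x ^ 2 * ψ x * (ψ y - ψ x) else 0)
            + (if G.Adj x y then g y ^ 2 * ψ y * (ψ x - ψ y) else 0))) :=
            Finset.sum_congr rfl fun x _ => Finset.sum_congr rfl fun y _ => e1 x y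
        _ = (∑ x : V, ∑ y : V, (if G.Adj x y then (f x - f y) ^ 2 else 0))
            + ((∑ x : V, ∑ y : V, (if G.Adj x y then g x ^ 2 * ψ x * (ψ y - ψ x) else 0))
            + (∑ x : V, ∑ y : V, (if G.Adj x y then g y ^ 2 * ψ y * (ψ x - ψ y) else 0))) := by
            simp only [Finset.sum_add_distrib]
        _ = _ := by rw [hsum3, hsum2]; ring
    have hsplit : ∑ x : V, (W x - E) * f x ^ 2
        = ∑ x : V, W x * f x ^ 2 - E * ∑ x : V, f x ^ 2 := by
      rw [Finset.mul_sum, ← Finset.sum_sub_distrib]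
      exact Finset.sum_congr rfl fun x _ => by ring
    rw [hfsq, hS, hsplit]
    ring
  -- Variance identity
  have hvar : ∑ x : V, ∑ y : V, ψ x ^ 2 * ψ y ^ 2 * (g x - g y) ^ 2
      = 2 * (∑ z : V, ψ z ^ 2) * (∑ z : V, f z ^ 2) := by
    calc ∑ x : V, ∑ y : V, ψ x ^ 2 * ψ y ^ 2 * (g x - g y) ^ 2
        = ∑ x : V, ∑ y : V,
            (f x ^ 2 * ψ y ^ 2 + ψ x ^ 2 * f y ^ 2 - (2 * (f x * ψ x)) * (f y * ψ y)) :=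
          Finset.sum_congr rfl fun x _ => Finset.sum_congr rfl fun y _ => by
            rw [hfg x, hfg y]; ring
      _ = ∑ x : V, (f x ^ 2 * ∑ z : V, ψ z ^ 2 + ψ x ^ 2 * ∑ z : V, f z ^ 2
            - (2 * (f x * ψ x)) * ∑ z : V, f z * ψ z) :=
          Finset.sum_congr rfl fun x _ => by
            rw [Finset.sum_sub_distrib, Finset.sum_add_distrib, ← Finset.mul_sum,
              ← Finset.mul_sum, ← Finset.mul_sum]
      _ = 2 * (∑ z : V, ψ z ^ 2) * (∑ z : V, f z ^ 2) := by
          rw [Finset.sum_sub_distrib, Finset.sum_add_distrib, ← Finset.sum_mul,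
            ← Finset.sum_mul, ← Finset.sum_mul, hf0]
          ring
  -- Per-pair path bound
  have hpair : ∀ x y : V, ψ x ^ 2 * ψ y ^ 2 * (g x - g y) ^ 2
      ≤ n * (ψ x ^ 2 + ψ y ^ 2) * S := by
    intro x y
    obtain ⟨p, hp, hps⟩ := aux_exists_good_path G ψ hpeak x y
    set m : ℝ := min (ψ x) (ψ y) with hm
    have hm0 : 0 < m := lt_min (hψpos x) (hψpos y)
    have hnodup : p.darts.Nodup := List.Nodup.of_map _ hp.edges_nodup
    set t : Finset G.Dart := p.darts.toFinset with ht
    have htel : ∑ d ∈ t, (g d.toProd.2 - g d.toProd.1) = g y - g x := by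
      rw [ht, List.sum_toFinset _ hnodup]
      exact aux_telescope G g p
    have hcardt : (t.card : ℝ) ≤ n := by
      have h1 : t.card = p.length := by
        rw [ht, List.toFinset_card_of_nodup hnodup, SimpleGraph.Walk.length_darts]
      have h2 : p.length < Fintype.card V := hp.length_lt
      rw [h1, hn]
      exact_mod_cast le_of_lt h2
    have hCS : (g x - g y) ^ 2
        ≤ (t.card : ℝ) * ∑ d ∈ t, (g d.toProd.2 - g d.toProd.1) ^ 2 := by
      have h := sq_sum_le_card_mul_sum_sq (s := t)
        (f := fun d => g d.toProd.2 - g d.toProd.1)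
      rw [htel] at h
      calc (g x - g y) ^ 2 = (g y - g x) ^ 2 := by ring
        _ ≤ _ := h
    have hdart : ∀ d ∈ t,
        ψ x ^ 2 * ψ y ^ 2 * (g d.toProd.2 - g d.toProd.1) ^ 2
        ≤ (ψ x ^ 2 + ψ y ^ 2)
            * (ψ d.toProd.1 * ψ d.toProd.2 * (g d.toProd.1 - g d.toProd.2) ^ 2) := by
      intro d hd
      have hd' : d ∈ p.darts := List.mem_toFinset.mp hd
      have h1 : m ≤ ψ d.toProd.1 := hps _ (p.dart_fst_mem_support_of_mem_darts hd')
      have h2 : m ≤ ψ d.toProd.2 := hps _ (p.dart_snd_mem_support_of_mem_darts hd')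
      have hw : m * m ≤ ψ d.toProd.1 * ψ d.toProd.2 :=
        mul_le_mul h1 h2 hm0.le (le_trans hm0.le h1)
      have hxy : ψ x ^ 2 * ψ y ^ 2 ≤ (m * m) * (ψ x ^ 2 + ψ y ^ 2) := by
        rcases le_total (ψ x) (ψ y) with h | h
        · rw [hm, min_eq_left h]
          nlinarith [sq_nonneg (ψ x ^ 2)]
        · rw [hm, min_eq_right h]
          nlinarith [sq_nonneg (ψ y ^ 2)]
      have hwxy : ψ x ^ 2 * ψ y ^ 2
          ≤ (ψ x ^ 2 + ψ y ^ 2) * (ψ d.toProd.1 * ψ d.toProd.2) := by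
        have h3 := mul_le_mul_of_nonneg_right hw
          (by positivity : (0:ℝ) ≤ ψ x ^ 2 + ψ y ^ 2)
        nlinarith [hxy, h3]
      calc ψ x ^ 2 * ψ y ^ 2 * (g d.toProd.2 - g d.toProd.1) ^ 2
          = ψ x ^ 2 * ψ y ^ 2 * (g d.toProd.1 - g d.toProd.2) ^ 2 := by ring
        _ ≤ ((ψ x ^ 2 + ψ y ^ 2) * (ψ d.toProd.1 * ψ d.toProd.2))
              * (g d.toProd.1 - g d.toProd.2) ^ 2 :=
            mul_le_mul_of_nonneg_right hwxy (sq_nonneg _)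
        _ = (ψ x ^ 2 + ψ y ^ 2)
              * (ψ d.toProd.1 * ψ d.toProd.2 * (g d.toProd.1 - g d.toProd.2) ^ 2) := by
            ring
    have hsub : ∑ d ∈ t, ψ d.toProd.1 * ψ d.toProd.2 * (g d.toProd.1 - g d.toProd.2) ^ 2
        ≤ S := by
      set F : V × V → ℝ := fun q =>
        if G.Adj q.1 q.2 then ψ q.1 * ψ q.2 * (g q.1 - g q.2) ^ 2 else 0 with hF
      have hFnn : ∀ q : V × V, 0 ≤ F q := by
        intro q
        rw [hF]
        by_cases h : G.Adj q.1 q.2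
        · simp only [if_pos h]
          have := (hψpos q.1).le
          have := (hψpos q.2).le
          positivity
        · simp [h]
      have h1 : ∑ d ∈ t, ψ d.toProd.1 * ψ d.toProd.2 * (g d.toProd.1 - g d.toProd.2) ^ 2
          = ∑ d ∈ t, F d.toProd := by
        refine Finset.sum_congr rfl fun d _ => ?_
        rw [hF]
        simp only [if_pos d.adj]
      have h2 : ∑ d ∈ t, F d.toProd
          = ∑ q ∈ t.image (fun d => d.toProd), F q :=
        (Finset.sum_image (fun a _ b _ h => SimpleGraph.Dart.toProd_injective h)).symm
      have h3 : ∑ q ∈ t.image (fun d => d.toProd), F q ≤ ∑ q ∈ univ ×ˢ univ, F q :=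
        Finset.sum_le_sum_of_subset_of_nonneg
          (fun q _ => by simp) (fun q _ _ => hFnn q)
      have h4 : ∑ q ∈ univ ×ˢ univ, F q = S := by
        rw [hSdef, Finset.sum_product]
      linarith
    have hsum_t_nonneg : 0 ≤ ∑ d ∈ t,
        ψ d.toProd.1 * ψ d.toProd.2 * (g d.toProd.1 - g d.toProd.2) ^ 2 := by
      refine Finset.sum_nonneg fun d _ => ?_
      have := (hψpos d.toProd.1).le
      have := (hψpos d.toProd.2).le
      positivity
    calc ψ x ^ 2 * ψ y ^ 2 * (g x - g y) ^ 2
        ≤ ψ x ^ 2 * ψ y ^ 2 * ((t.card : ℝ)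
            * ∑ d ∈ t, (g d.toProd.2 - g d.toProd.1) ^ 2) :=
          mul_le_mul_of_nonneg_left hCS (by positivity)
      _ = (t.card : ℝ) * (ψ x ^ 2 * ψ y ^ 2
            * ∑ d ∈ t, (g d.toProd.2 - g d.toProd.1) ^ 2) := by ring
      _ = (t.card : ℝ) * ∑ d ∈ t,
            ψ x ^ 2 * ψ y ^ 2 * (g d.toProd.2 - g d.toProd.1) ^ 2 := by
          rw [Finset.mul_sum]
      _ ≤ (t.card : ℝ) * ∑ d ∈ t, (ψ x ^ 2 + ψ y ^ 2)
            * (ψ d.toProd.1 * ψ d.toProd.2 * (g d.toProd.1 - g d.toProd.2) ^ 2) :=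
          mul_le_mul_of_nonneg_left (Finset.sum_le_sum hdart) (Nat.cast_nonneg _)
      _ = (t.card : ℝ) * ((ψ x ^ 2 + ψ y ^ 2) * ∑ d ∈ t,
            ψ d.toProd.1 * ψ d.toProd.2 * (g d.toProd.1 - g d.toProd.2) ^ 2) := by
          rw [← Finset.mul_sum]
      _ ≤ n * ((ψ x ^ 2 + ψ y ^ 2) * S) := by
          apply mul_le_mul hcardt
          · exact mul_le_mul_of_nonneg_left hsub (by positivity)
          · positivity
          · exact hn0.le
      _ = n * (ψ x ^ 2 + ψ y ^ 2) * S := by ring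
  -- Sum the per-pair bound
  have hdouble : ∑ x : V, ∑ y : V, (ψ x ^ 2 + ψ y ^ 2)
      = 2 * (Fintype.card V : ℝ) * ∑ z : V, ψ z ^ 2 := by
    calc ∑ x : V, ∑ y : V, (ψ x ^ 2 + ψ y ^ 2)
        = ∑ x : V, ((Fintype.card V : ℝ) * ψ x ^ 2 + ∑ z : V, ψ z ^ 2) :=
          Finset.sum_congr rfl fun x _ => by
            rw [Finset.sum_add_distrib, Finset.sum_const, nsmul_eq_mul, Finset.card_univ]
      _ = (Fintype.card V : ℝ) * ∑ z : V, ψ z ^ 2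
            + (Fintype.card V : ℝ) * ∑ z : V, ψ z ^ 2 := by
          rw [Finset.sum_add_distrib, ← Finset.mul_sum, Finset.sum_const, nsmul_eq_mul,
            Finset.card_univ]
      _ = _ := by ring
  have hsum_main : 2 * (∑ z : V, ψ z ^ 2) * (∑ z : V, f z ^ 2)
      ≤ 2 * n ^ 2 * (∑ z : V, ψ z ^ 2) * S := by
    rw [← hvar]
    calc ∑ x : V, ∑ y : V, ψ x ^ 2 * ψ y ^ 2 * (g x - g y) ^ 2
        ≤ ∑ x : V, ∑ y : V, (n * S) * (ψ x ^ 2 + ψ y ^ 2) :=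
          Finset.sum_le_sum fun x _ => Finset.sum_le_sum fun y _ => by
            calc ψ x ^ 2 * ψ y ^ 2 * (g x - g y) ^ 2 ≤ n * (ψ x ^ 2 + ψ y ^ 2) * S :=
                hpair x y
              _ = (n * S) * (ψ x ^ 2 + ψ y ^ 2) := by ring
      _ = ∑ x : V, (n * S) * ∑ y : V, (ψ x ^ 2 + ψ y ^ 2) :=
          Finset.sum_congr rfl fun x _ => (Finset.mul_sum _ _ _).symm
      _ = (n * S) * ∑ x : V, ∑ y : V, (ψ x ^ 2 + ψ y ^ 2) := (Finset.mul_sum _ _ _).symm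
      _ = (n * S) * (2 * n * ∑ z : V, ψ z ^ 2) := by rw [hdouble, ← hn]
      _ = 2 * n ^ 2 * (∑ z : V, ψ z ^ 2) * S := by ring
  have hπpos : 0 < ∑ z : V, ψ z ^ 2 :=
    Finset.sum_pos (fun z _ => pow_pos (hψpos z) 2) Finset.univ_nonempty
  have hSf : (∑ z : V, f z ^ 2) ≤ n ^ 2 * S := by
    nlinarith [hsum_main, hπpos]
  rw [hident, hfsq]
  have h3 : (1 / (2 * n ^ 2)) * (∑ z : V, f z ^ 2)
      ≤ (1 / (2 * n ^ 2)) * (n ^ 2 * S) :=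
    mul_le_mul_of_nonneg_left hSf (by positivity)
  have h4 : (1 / (2 * n ^ 2)) * (n ^ 2 * S) = S / 2 := by
    field_simp
  nlinarith [h3, h4]

end Aux

/-- If the ground state of `H = L_G + diag W` on a connected graph is single-peaked,
then the spectral gap satisfies `γ ≥ 1/(2(|W| + d_G)|V_G|²)`,
where `|W| = max W − min W`. -/


theorem stmt_9 {V : Type*} [Fintype V] [DecidableEq V]
    (G : SimpleGraph V) [DecidableRel G.Adj] (hG : G.Connected)
    (hcard : 2 ≤ Fintype.card V) (W : V → ℝ)
    (ψ : V → ℝ) (hψpos : ∀ x, 0 < ψ x) (E : ℝ)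
    (hground : IsLeast (spectrum ℝ (hamiltonian G W)) E)
    (heig : (hamiltonian G W) *ᵥ ψ = E • ψ)
    (hpeak : SinglePeaked G ψ) :
    specGap (hamiltonian_isHermitian G W) ≥
      1 / (2 * ((⨆ x, W x) - (⨅ x, W x) + (G.maxDegree : ℝ)) *
        (Fintype.card V : ℝ) ^ 2) := by
  classical
  have hNonempty : Nonempty V := Fintype.card_pos_iff.mp (by omega)
  obtain ⟨x0⟩ := hNonempty
  have hNonempty : Nonempty V := ⟨x0⟩
  set hA := hamiltonian_isHermitian G W with hhA
  set H := hamiltonian G W with hH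
  set n : ℝ := (Fintype.card V : ℝ) with hn
  have hn0 : (0:ℝ) < n := by rw [hn]; exact_mod_cast Fintype.card_pos
  have hWrange : (⨅ x, W x) ≤ (⨆ x, W x) := by
    have h1 : (⨅ x, W x) ≤ W x0 := ciInf_le (Set.finite_range W).bddBelow x0
    have h2 : W x0 ≤ ⨆ x, W x := le_ciSup (Set.finite_range W).bddAbove x0
    linarith
  have hdeg : (1:ℝ) ≤ (G.maxDegree : ℝ) := by
    obtain ⟨y0, hy0⟩ := Fintype.exists_ne_of_one_lt_card (by omega) x0
    obtain ⟨p⟩ := hG.preconnected y0 x0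
    have hadj : ∃ z, G.Adj y0 z := by
      cases p with
      | nil => exact absurd rfl hy0
      | cons h q => exact ⟨_, h⟩
    have h1 : 0 < G.degree y0 := (SimpleGraph.degree_pos_iff_exists_adj G y0).mpr hadj
    have h2 : G.degree y0 ≤ G.maxDegree := G.degree_le_maxDegree y0
    have : 1 ≤ G.maxDegree := by omega
    exact_mod_cast this
  set K : ℝ := (⨆ x, W x) - (⨅ x, W x) + (G.maxDegree : ℝ) with hKdef
  have hK1 : (1:ℝ) ≤ K := by rw [hKdef]; linarith
  have hK0 : (0:ℝ) < K := lt_of_lt_of_le one_pos hK1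
  set c : ℝ := 1 / (2 * K * n ^ 2) with hc
  have hcle : c ≤ 1 / (2 * n ^ 2) := by
    rw [hc]
    apply one_div_le_one_div_of_le (by positivity)
    nlinarith [hK1, hn0]
  have hc0 : 0 < c := by rw [hc]; positivity
  have key := aux_key G W ψ E hψpos heig hpeak
  have hspec : spectrum ℝ H = Set.range hA.eigenvalues :=
    Matrix.IsHermitian.spectrum_real_eq_range_eigenvalues hA
  set f₀ : Fin (Fintype.card V) → ℝ := hA.eigenvalues ∘ (Fintype.equivFin V).symm with hf₀
  have hmono : Monotone (f₀ ∘ Tuple.sort f₀) := Tuple.monotone_sort f₀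
  set idx0 : Fin (Fintype.card V) := ⟨0, by omega⟩ with hidx0
  set idx1 : Fin (Fintype.card V) := ⟨1, by omega⟩ with hidx1
  have hse : ∀ i, sortedEigenvalues hA i = f₀ (Tuple.sort f₀ i) := fun i => rfl
  set μ0 : ℝ := sortedEigenvalues hA idx0 with hμ0
  set μ1 : ℝ := sortedEigenvalues hA idx1 with hμ1def
  have hEeq : μ0 = E := by
    apply le_antisymm
    · obtain ⟨v, hv⟩ : ∃ v, hA.eigenvalues v = E := by
        have h := hground.1
        rw [hspec] at h
        exact h
      have hj : f₀ (Fintype.equivFin V v) = E := by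
        rw [hf₀]
        simp [hv]
      calc μ0 = (f₀ ∘ Tuple.sort f₀) idx0 := by rw [hμ0, hse]; rfl
        _ ≤ (f₀ ∘ Tuple.sort f₀) ((Tuple.sort f₀)⁻¹ (Fintype.equivFin V v)) :=
            hmono (by rw [hidx0]; exact Fin.mk_le_mk.mpr (Nat.zero_le _))
        _ = E := by
            simp only [Function.comp_apply, Equiv.Perm.coe_inv, Equiv.apply_symm_apply]
            exact hj
      -- note: (sort)⁻¹ j : need Fin.mk_le_mk with j.val
    · have hmem : μ0 ∈ spectrum ℝ H := by
        rw [hspec]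
        exact ⟨(Fintype.equivFin V).symm (Tuple.sort f₀ idx0), rfl⟩
      exact hground.2 hmem
  have hμ1 : E + c ≤ μ1 := by
    by_contra hlt
    push_neg at hlt
    have hμ0le : μ0 ≤ μ1 := by
      rw [hμ0, hμ1def, hse, hse]
      exact hmono (by rw [hidx0, hidx1]; exact Fin.mk_le_mk.mpr (by omega))
    set u0 : V := (Fintype.equivFin V).symm (Tuple.sort f₀ idx0) with hu0
    set u1 : V := (Fintype.equivFin V).symm (Tuple.sort f₀ idx1) with hu1
    have hne : u0 ≠ u1 := by
      intro h
      have h2 : Tuple.sort f₀ idx0 = Tuple.sort f₀ idx1 :=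
        (Fintype.equivFin V).symm.injective h
      have h3 : idx0 = idx1 := (Tuple.sort f₀).injective h2
      have h4 := congrArg Fin.val h3
      rw [hidx0, hidx1] at h4
      exact absurd h4 (by norm_num)
    have hev0 : hA.eigenvalues u0 = μ0 := rfl
    have hev1 : hA.eigenvalues u1 = μ1 := rfl
    set φ0 : V → ℝ := ⇑(hA.eigenvectorBasis u0) with hφ0
    set φ1 : V → ℝ := ⇑(hA.eigenvectorBasis u1) with hφ1
    have hHφ0 : H *ᵥ φ0 = μ0 • φ0 := by
      rw [hφ0, ← hev0]; exact hA.mulVec_eigenvectorBasis u0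
    have hHφ1 : H *ᵥ φ1 = μ1 • φ1 := by
      rw [hφ1, ← hev1]; exact hA.mulVec_eigenvectorBasis u1
    have hdot : ∀ i j : V, (⇑(hA.eigenvectorBasis i) : V → ℝ) ⬝ᵥ ⇑(hA.eigenvectorBasis j)
        = if i = j then 1 else 0 := by
      intro i j
      have h := orthonormal_iff_ite.mp hA.eigenvectorBasis.orthonormal i j
      simpa [PiLp.inner_apply, RCLike.inner_apply, conj_trivial, dotProduct, mul_comm] using h
    have hd00 : φ0 ⬝ᵥ φ0 = 1 := by rw [hφ0]; simpa using hdot u0 u0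
    have hd11 : φ1 ⬝ᵥ φ1 = 1 := by rw [hφ1]; simpa using hdot u1 u1
    have hd01 : φ0 ⬝ᵥ φ1 = 0 := by rw [hφ0, hφ1]; simpa [hne] using hdot u0 u1
    have hd10 : φ1 ⬝ᵥ φ0 = 0 := by
      rw [hφ0, hφ1]; simpa [Ne.symm hne] using hdot u1 u0
    have hμ0E : μ0 ≤ E + 1 / (2 * n ^ 2) := by
      rw [hEeq]; have : 0 < 1 / (2*n^2) := by positivity
      linarith
    have hμ1E : μ1 < E + 1 / (2 * n ^ 2) := lt_of_lt_of_le hlt (by linarith)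
    by_cases ha : φ0 ⬝ᵥ ψ = 0
    · have hk := key φ0 ha
      have hquad : φ0 ⬝ᵥ (H *ᵥ φ0) = μ0 := by
        rw [hHφ0, dotProduct_smul, smul_eq_mul, hd00, mul_one]
      rw [hquad, hd00, mul_one] at hk
      rw [hEeq] at hk
      have : 0 < 1 / (2*n^2) := by positivity
      linarith [hμ0le]
    · set a : ℝ := φ0 ⬝ᵥ ψ with hadef
      set b : ℝ := φ1 ⬝ᵥ ψ with hbdef
      set w : V → ℝ := b • φ0 - a • φ1 with hw
      have hwψ : w ⬝ᵥ ψ = 0 := by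
        rw [hw, sub_dotProduct, smul_dotProduct, smul_dotProduct, ← hadef, ← hbdef]
        simp only [smul_eq_mul]
        ring
      have hHw : H *ᵥ w = b • (μ0 • φ0) - a • (μ1 • φ1) := by
        rw [hw, Matrix.mulVec_sub, Matrix.mulVec_smul, Matrix.mulVec_smul, hHφ0, hHφ1]
      have hquad : w ⬝ᵥ (H *ᵥ w) = μ0 * b ^ 2 + μ1 * a ^ 2 := by
        rw [hHw, hw]
        simp only [sub_dotProduct, dotProduct_sub, smul_dotProduct, dotProduct_smul,
          hd00, hd11, hd01, hd10, smul_eq_mul, mul_one, mul_zero]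
        ring
      have hww : w ⬝ᵥ w = b ^ 2 + a ^ 2 := by
        rw [hw]
        simp only [sub_dotProduct, dotProduct_sub, smul_dotProduct, dotProduct_smul,
          hd00, hd11, hd01, hd10, smul_eq_mul, mul_one, mul_zero]
        ring
      have hk := key w hwψ
      rw [hquad, hww] at hk
      have ha2 : 0 < a ^ 2 := by
        have : a ≠ 0 := ha
        positivity
      nlinarith [hk, ha2, sq_nonneg b, hμ0E, hμ1E]
  have hgap : specGap hA = μ1 - μ0 := by
    rw [specGap, dif_pos hcard]
  rw [hgap, hEeq]
  linarith [hμ1]
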